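/- Let p, q, r, s be pairwise distinct complex numbers and k₁, k₂ natural numbers with k₁ ≥ 1. Then there exist complex numbers a, b, c, d, not all zero, such that a·(X−p)^{k₁+1}(X−q)^{k₁}(X−r)^{k₂+1}(X−s)^{k₂} + b·(X−q)^{k₁+1}(X−p)^{k₁}(X−r)^{k₂+1}(X−s)^{k₂} + c·(X−p)^{k₁+1}(X−q)^{k₁}(X−s)^{k₂+1}(X−r)^{k₂} + d·(X−q)^{k₁+1}(X−p)^{k₁}(X−s)^{k₂+1}(X−r)^{k₂} = 0 in ℂ[X], and the four polynomials appearing are pairwise non-proportional. -/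
import Mathlib


open Polynomial

/-- Two polynomials are non-proportional: neither is a scalar multiple of the other. -/
def NonProp (f g : Polynomial ℂ) : Prop := ∀ e : ℂ, f ≠ C e * g ∧ g ≠ C e * f

lemma rm_pow_ne (x b : ℂ) (h : x ≠ b) (n : ℕ) :
    rootMultiplicity x ((X - C b) ^ n : ℂ[X]) = 0 := by
  apply rootMultiplicity_eq_zero
  simp [IsRoot, sub_eq_zero, h]

lemma rm4sum (x a b c d : ℂ) (m n u v : ℕ) :
    rootMultiplicity x ((X - C a) ^ m * (X - C b) ^ n * (X - C c) ^ u * (X - C d) ^ v : ℂ[X])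
      = rootMultiplicity x ((X - C a) ^ m : ℂ[X]) + rootMultiplicity x ((X - C b) ^ n : ℂ[X])
        + rootMultiplicity x ((X - C c) ^ u : ℂ[X])
        + rootMultiplicity x ((X - C d) ^ v : ℂ[X]) := by
  have h1 : ((X - C a) ^ m : ℂ[X]) ≠ 0 := pow_ne_zero _ (X_sub_C_ne_zero a)
  have h2 : ((X - C b) ^ n : ℂ[X]) ≠ 0 := pow_ne_zero _ (X_sub_C_ne_zero b)
  have h3 : ((X - C c) ^ u : ℂ[X]) ≠ 0 := pow_ne_zero _ (X_sub_C_ne_zero c)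
  have h4 : ((X - C d) ^ v : ℂ[X]) ≠ 0 := pow_ne_zero _ (X_sub_C_ne_zero d)
  rw [rootMultiplicity_mul (mul_ne_zero (mul_ne_zero (mul_ne_zero h1 h2) h3) h4),
      rootMultiplicity_mul (mul_ne_zero (mul_ne_zero h1 h2) h3),
      rootMultiplicity_mul (mul_ne_zero h1 h2)]

lemma nonprop_of_rm (f g : ℂ[X]) (hf : f ≠ 0) (hg : g ≠ 0) (x : ℂ)
    (h : rootMultiplicity x f ≠ rootMultiplicity x g) : NonProp f g := by
  intro e
  constructor
  · intro he
    have hce : (C e : ℂ[X]) * g ≠ 0 := he ▸ hf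
    exact h (by rw [he, rootMultiplicity_mul hce, rootMultiplicity_C, zero_add])
  · intro he
    have hce : (C e : ℂ[X]) * f ≠ 0 := he ▸ hg
    have : rootMultiplicity x g = rootMultiplicity x f := by
      rw [he, rootMultiplicity_mul hce, rootMultiplicity_C, zero_add]
    exact h this.symm

theorem stmt_3 (p q r s : ℂ) (hpq : p ≠ q) (hpr : p ≠ r) (hps : p ≠ s)
    (hqr : q ≠ r) (hqs : q ≠ s) (hrs : r ≠ s) (k₁ k₂ : ℕ) (hk₁ : 1 ≤ k₁) :
    (∃ a b c d : ℂ, ¬(a = 0 ∧ b = 0 ∧ c = 0 ∧ d = 0) ∧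
      C a * ((X - C p) ^ (k₁ + 1) * (X - C q) ^ k₁ * (X - C r) ^ (k₂ + 1) * (X - C s) ^ k₂) +
      C b * ((X - C q) ^ (k₁ + 1) * (X - C p) ^ k₁ * (X - C r) ^ (k₂ + 1) * (X - C s) ^ k₂) +
      C c * ((X - C p) ^ (k₁ + 1) * (X - C q) ^ k₁ * (X - C s) ^ (k₂ + 1) * (X - C r) ^ k₂) +
      C d * ((X - C q) ^ (k₁ + 1) * (X - C p) ^ k₁ * (X - C s) ^ (k₂ + 1) * (X - C r) ^ k₂) = 0) ∧
    Pairwise fun i j : Fin 4 =>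
      NonProp
        ((![(X - C p) ^ (k₁ + 1) * (X - C q) ^ k₁ * (X - C r) ^ (k₂ + 1) * (X - C s) ^ k₂,
            (X - C q) ^ (k₁ + 1) * (X - C p) ^ k₁ * (X - C r) ^ (k₂ + 1) * (X - C s) ^ k₂,
            (X - C p) ^ (k₁ + 1) * (X - C q) ^ k₁ * (X - C s) ^ (k₂ + 1) * (X - C r) ^ k₂,
            (X - C q) ^ (k₁ + 1) * (X - C p) ^ k₁ * (X - C s) ^ (k₂ + 1) * (X - C r) ^ k₂]) i)
        ((![(X - C p) ^ (k₁ + 1) * (X - C q) ^ k₁ * (X - C r) ^ (k₂ + 1) * (X - C s) ^ k₂,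
            (X - C q) ^ (k₁ + 1) * (X - C p) ^ k₁ * (X - C r) ^ (k₂ + 1) * (X - C s) ^ k₂,
            (X - C p) ^ (k₁ + 1) * (X - C q) ^ k₁ * (X - C s) ^ (k₂ + 1) * (X - C r) ^ k₂,
            (X - C q) ^ (k₁ + 1) * (X - C p) ^ k₁ * (X - C s) ^ (k₂ + 1) * (X - C r) ^ k₂]) j) := by
  constructor
  · refine ⟨q - s, -(p - s), -(q - r), p - r, ?_, ?_⟩
    · rintro ⟨ha, -, -, -⟩
      exact hqs (sub_eq_zero.mp ha)
    · simp only [map_sub, map_neg]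
      ring
  · have hne : ∀ a b c d : ℂ,
        ((X - C a) ^ (k₁+1) * (X - C b) ^ k₁ * (X - C c) ^ (k₂+1) * (X - C d) ^ k₂ : ℂ[X]) ≠ 0 :=
      fun a b c d => mul_ne_zero (mul_ne_zero (mul_ne_zero
        (pow_ne_zero _ (X_sub_C_ne_zero a)) (pow_ne_zero _ (X_sub_C_ne_zero b)))
        (pow_ne_zero _ (X_sub_C_ne_zero c))) (pow_ne_zero _ (X_sub_C_ne_zero d))
    intro i j hij
    fin_cases i <;> fin_cases j <;>
      simp only [Fin.isValue, Matrix.cons_val_zero, Matrix.cons_val_one, Matrix.head_cons,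
        Matrix.cons_val_two, Matrix.tail_cons, Matrix.cons_val_three] <;>
      first
      | exact absurd rfl hij
      | (apply nonprop_of_rm _ _ (hne _ _ _ _) (hne _ _ _ _) p
         simp only [rm4sum, rootMultiplicity_X_sub_C_pow, rm_pow_ne p q hpq,
           rm_pow_ne p r hpr, rm_pow_ne p s hps]
         omega)
      | (apply nonprop_of_rm _ _ (hne _ _ _ _) (hne _ _ _ _) r
         simp only [rm4sum, rootMultiplicity_X_sub_C_pow, rm_pow_ne r p hpr.symm,
           rm_pow_ne r q hqr.symm, rm_pow_ne r s hrs]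
         omega)
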